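/- Let Γ be a finite simple graph with no dominated vertices (Dom(Γ) = ∅) and G = G(Γ). Then: (i) Conj(G) ∩ St(K) = Conj_S(G) = {1} and Conj(G) = Conj_V(G) = Conj_N(G), and Conj(G) is a normal subgroup of St^conj(K); (ii) St(L) = St(K). -/

import Mathlib

namespace PCG

variable {X : Type*}

/-- The orthogonal complement of a set of vertices: all vertices at distance at
most one from every element of `Y`. -/
def perp (Γ : SimpleGraph X) (Y : Set X) : Set X :=
  {u | ∀ y ∈ Y, u = y ∨ Γ.Adj u y}

/-- The closure operator `cl(Y) = Y^⊥⊥`. -/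
def cl (Γ : SimpleGraph X) (Y : Set X) : Set X :=
  perp Γ (perp Γ Y)

/-- The admissible-set operator `𝔞(Y) = ⋂_{y ∈ Y} (y^⊥ \ {y})^⊥` (with `𝔞(∅) = X`). -/
def aSet (Γ : SimpleGraph X) (Y : Set X) : Set X :=
  ⋂ y ∈ Y, perp Γ (perp Γ {y} \ {y})

/-- A set is admissible if it is `𝔞(Y)` for some `Y`. -/
def IsAdmissible (Γ : SimpleGraph X) (A : Set X) : Prop :=
  ∃ Y : Set X, A = aSet Γ Y

/-- A set is closed if it equals its closure. -/
def IsClosedSet (Γ : SimpleGraph X) (Y : Set X) : Prop :=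
  Y = cl Γ Y

/-- `x` dominates `y` if `x^⊥ ∩ y^⊥ = y^⊥ \ {y}`. -/
def Dominates (Γ : SimpleGraph X) (x y : X) : Prop :=
  perp Γ {x} ∩ perp Γ {y} = perp Γ {y} \ {y}

/-- The set of dominated vertices. -/
def Dom (Γ : SimpleGraph X) : Set X :=
  {y | ∃ x, Dominates Γ x y}

/-- The `∼⊥`-equivalence class of `x`: vertices with the same star as `x`. -/
def perpClass (Γ : SimpleGraph X) (x : X) : Set X :=
  {y | perp Γ {y} = perp Γ {x}}

/-- The `∼◇`-equivalence class of `x`: vertices with the same link as `x`. -/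
def diaClass (Γ : SimpleGraph X) (x : X) : Set X :=
  {y | perp Γ {y} \ {y} = perp Γ {x} \ {x}}

/-- The `∼`-equivalence class `[x]`. -/
def simClass (Γ : SimpleGraph X) (x : X) : Set X :=
  perpClass Γ x ∪ diaClass Γ x

/-- The outer admissible set of `y`. -/
def out (Γ : SimpleGraph X) (y : X) : Set X :=
  {x | Dominates Γ x y ∧ simClass Γ x ≠ simClass Γ y}

/-- `C` is the vertex set of a connected component of the full subgraph of `Γ` on `S`. -/
def IsCompOf (Γ : SimpleGraph X) (S : Set X) (C : Set X) : Prop :=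
  ∃ K : (Γ.induce S).ConnectedComponent, C = Subtype.val '' K.supp

/-- Balanced graphs. -/
def Balanced (Γ : SimpleGraph X) : Prop :=
  ∀ v ∈ Dom Γ, out Γ v = ∅ ∨ ∃ C : Set X, IsCompOf Γ ((perp Γ {v})ᶜ) C ∧ out Γ v ⊆ C

/-- Relators of the partially commutative group: commutators of adjacent vertices. -/
def raagRels (Γ : SimpleGraph X) : Set (FreeGroup X) :=
  {w | ∃ x y : X, Γ.Adj x y ∧
    w = FreeGroup.of x * FreeGroup.of y * (FreeGroup.of x)⁻¹ * (FreeGroup.of y)⁻¹}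

/-- The partially commutative group (right-angled Artin group) of `Γ`. -/
abbrev RAAG (Γ : SimpleGraph X) : Type _ := PresentedGroup (raagRels Γ)

/-- The generator of `RAAG Γ` corresponding to a vertex. -/
def gen (Γ : SimpleGraph X) (x : X) : RAAG Γ := PresentedGroup.of x

/-- The canonical parabolic subgroup generated by a set of vertices. -/
def parab (Γ : SimpleGraph X) (Y : Set X) : Subgroup (RAAG Γ) :=
  Subgroup.closure (gen Γ '' Y)

/-- Conjugate of a subgroup: `H^f = f⁻¹ H f`. -/
def conjBy {G : Type*} [Group G] (H : Subgroup G) (f : G) : Subgroup G :=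
  Subgroup.map (MulAut.conj f⁻¹).toMonoidHom H

/-- Inversions. -/
def InvSet (Γ : SimpleGraph X) : Set (MulAut (RAAG Γ)) :=
  {φ | ∃ x : X, φ (gen Γ x) = (gen Γ x)⁻¹ ∧ ∀ y : X, y ≠ x → φ (gen Γ y) = gen Γ y}

/-- Transvections. -/
def TrSet (Γ : SimpleGraph X) : Set (MulAut (RAAG Γ)) :=
  {φ | ∃ x y : X, y ≠ x ∧
    (φ (gen Γ x) = gen Γ x * gen Γ y ∨ φ (gen Γ x) = (gen Γ y)⁻¹ * gen Γ x) ∧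
    ∀ z : X, z ≠ x → φ (gen Γ z) = gen Γ z}

/-- Elementary conjugating automorphisms. -/
def LInnSet (Γ : SimpleGraph X) : Set (MulAut (RAAG Γ)) :=
  {φ | ∃ (x : X) (C : Set X) (ε : ℤ), (ε = 1 ∨ ε = -1) ∧
    IsCompOf Γ ((perp Γ {x})ᶜ) C ∧
    (∀ u ∈ C, φ (gen Γ u) = (gen Γ x ^ ε)⁻¹ * gen Γ u * gen Γ x ^ ε) ∧
    (∀ u : X, u ∉ C → φ (gen Γ u) = gen Γ u)}

/-- The subgroup `Aut*(G)` generated by inversions, transvections and elementary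
conjugating automorphisms. -/
def AutStar (Γ : SimpleGraph X) : Subgroup (MulAut (RAAG Γ)) :=
  Subgroup.closure (InvSet Γ ∪ TrSet Γ ∪ LInnSet Γ)

/-- Basis-conjugating automorphisms. -/
def IsBasisConj (Γ : SimpleGraph X) (φ : MulAut (RAAG Γ)) : Prop :=
  ∀ x : X, ∃ g : RAAG Γ, φ (gen Γ x) = g⁻¹ * gen Γ x * g

/-- Normal conjugating automorphisms. -/
def IsConjN (Γ : SimpleGraph X) (φ : MulAut (RAAG Γ)) : Prop :=
  IsBasisConj Γ φ ∧
    ∀ x : X, ∃ f : RAAG Γ, ∀ z ∈ aSet Γ {x}, φ (gen Γ z) = f⁻¹ * gen Γ z * f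

/-- Vertex conjugating automorphisms. -/
def IsConjV (Γ : SimpleGraph X) (φ : MulAut (RAAG Γ)) : Prop :=
  IsBasisConj Γ φ ∧
    ∀ x : X, ∃ f : RAAG Γ, ∀ y ∈ simClass Γ x, φ (gen Γ y) = f⁻¹ * gen Γ y * f

/-- Membership in `St(K)`. -/
def IsStK (Γ : SimpleGraph X) (φ : MulAut (RAAG Γ)) : Prop :=
  ∀ A : Set X, IsAdmissible Γ A →
    Subgroup.map φ.toMonoidHom (parab Γ A) = parab Γ A

/-- Membership in `St(L)`. -/
def IsStL (Γ : SimpleGraph X) (φ : MulAut (RAAG Γ)) : Prop :=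
  ∀ A : Set X, IsClosedSet Γ A →
    Subgroup.map φ.toMonoidHom (parab Γ A) = parab Γ A

/-- Membership in `St^conj(K)`. -/
def IsStConjK (Γ : SimpleGraph X) (φ : MulAut (RAAG Γ)) : Prop :=
  ∀ A : Set X, IsAdmissible Γ A →
    ∃ f : RAAG Γ, Subgroup.map φ.toMonoidHom (parab Γ A) = conjBy (parab Γ A) f

/-- Aggregate conjugating automorphisms. -/
def AggrSet (Γ : SimpleGraph X) : Set (MulAut (RAAG Γ)) :=
  {φ | ∃ (x : X) (C : Set X), IsCompOf Γ ({x}ᶜ) C ∧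
    (∀ y ∈ C, φ (gen Γ y) = (gen Γ x)⁻¹ * gen Γ y * gen Γ x) ∧
    (∀ y : X, y ∉ C → φ (gen Γ y) = gen Γ y)}

/-- Elementary singular conjugating automorphisms: those `α_{C,x^ε}` with `C` a singleton. -/
def LInnSSet (Γ : SimpleGraph X) : Set (MulAut (RAAG Γ)) :=
  {φ | ∃ (x y : X) (ε : ℤ), (ε = 1 ∨ ε = -1) ∧
    IsCompOf Γ ((perp Γ {x})ᶜ) {y} ∧
    φ (gen Γ y) = (gen Γ x ^ ε)⁻¹ * gen Γ y * gen Γ x ^ ε ∧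
    ∀ u : X, u ≠ y → φ (gen Γ u) = gen Γ u}

/-- Basic collected conjugating automorphisms. -/
def LInnCSet (Γ : SimpleGraph X) : Set (MulAut (RAAG Γ)) :=
  {φ | ∃ x u : X, Dominates Γ x u ∧
    (∀ v ∈ simClass Γ u \ {x}, φ (gen Γ v) = (gen Γ x)⁻¹ * gen Γ v * gen Γ x) ∧
    (∀ v : X, v ∉ simClass Γ u \ {x} → φ (gen Γ v) = gen Γ v)}

/-- Regular elementary conjugating automorphisms. -/
def LInnRSet (Γ : SimpleGraph X) : Set (MulAut (RAAG Γ)) :=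
  (LInnSet Γ ∩ {φ | IsConjV Γ φ}) \ LInnSSet Γ

/-- Basic vertex conjugating automorphisms. -/
def LInnVSet (Γ : SimpleGraph X) : Set (MulAut (RAAG Γ)) :=
  LInnRSet Γ ∪ LInnCSet Γ

/-- Tame extended elementary conjugating automorphisms. -/
def LInnTSet (Γ : SimpleGraph X) : Set (MulAut (RAAG Γ)) :=
  {φ | ∃ (y : X) (L : Set X) (ε : ℤ), (ε = 1 ∨ ε = -1) ∧
    (∀ v ∈ L, ∃ C : Set X, IsCompOf Γ ((perp Γ {y})ᶜ) C ∧ v ∈ C ∧ C ⊆ L) ∧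
    aSet Γ {y} ∩ L = ∅ ∧
    (∀ u ∈ L, φ (gen Γ u) = (gen Γ y ^ ε)⁻¹ * gen Γ u * gen Γ y ^ ε) ∧
    (∀ u : X, u ∉ L → φ (gen Γ u) = gen Γ u)}

/-- `K`-minimal vertices. -/
def KMin (Γ : SimpleGraph X) (x : X) : Prop :=
  ∀ y : X, aSet Γ {y} ⊆ aSet Γ {x} → aSet Γ {y} = aSet Γ {x}

/-- `L`-minimal vertices. -/
def LMin (Γ : SimpleGraph X) (x : X) : Prop :=
  ∀ y : X, cl Γ {y} ⊆ cl Γ {x} → cl Γ {y} = cl Γ {x}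

end PCG

namespace PCG

section Layer1

variable {X : Type*} {Γ : SimpleGraph X}

lemma mem_perp {u : X} {S : Set X} : u ∈ perp Γ S ↔ ∀ y ∈ S, u = y ∨ Γ.Adj u y :=
  Iff.rfl

lemma mem_perp_singleton {u y : X} : u ∈ perp Γ {y} ↔ u = y ∨ Γ.Adj u y := by
  simp [perp]

lemma self_mem_perp (y : X) : y ∈ perp Γ {y} := mem_perp_singleton.2 (Or.inl rfl)

lemma perp_singleton_symm {u y : X} : u ∈ perp Γ {y} ↔ y ∈ perp Γ {u} := by
  rw [mem_perp_singleton, mem_perp_singleton]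
  constructor
  · rintro (rfl | h)
    · exact Or.inl rfl
    · exact Or.inr h.symm
  · rintro (rfl | h)
    · exact Or.inl rfl
    · exact Or.inr h.symm

lemma aSet_singleton (x : X) : aSet Γ {x} = perp Γ (perp Γ {x} \ {x}) := by
  simp [aSet]

lemma mem_aSet_self (x : X) : x ∈ aSet Γ {x} := by
  rw [aSet_singleton]
  rintro w ⟨hw, hwx⟩
  rcases mem_perp_singleton.1 hw with rfl | h
  · exact absurd rfl hwx
  · exact Or.inr h.symm

lemma not_dominates (hdom : Dom Γ = ∅) (x y : X) : ¬ Dominates Γ x y := by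
  intro h
  have : y ∈ Dom Γ := ⟨x, h⟩
  rw [hdom] at this
  exact this

lemma aSet_subset_perp (hdom : Dom Γ = ∅) (x : X) : aSet Γ {x} ⊆ perp Γ {x} := by
  intro u hu
  rw [aSet_singleton] at hu
  by_contra hup
  refine not_dominates hdom u x ?_
  ext v
  constructor
  · rintro ⟨hvu, hvx⟩
    refine ⟨hvx, ?_⟩
    rintro rfl
    exact hup (perp_singleton_symm.1 hvu)
  · rintro ⟨hvx, hvne⟩
    refine ⟨?_, hvx⟩
    have := hu v ⟨hvx, hvne⟩
    rcases this with rfl | h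
    · exact self_mem_perp _
    · exact mem_perp_singleton.2 (Or.inr h.symm)

lemma aSet_clique (hdom : Dom Γ = ∅) {x u v : X} (hu : u ∈ aSet Γ {x})
    (hv : v ∈ aSet Γ {x}) (huv : u ≠ v) : Γ.Adj u v := by
  by_cases hvx : v = x
  · subst hvx
    rcases mem_perp_singleton.1 (aSet_subset_perp hdom v hu) with rfl | h
    · exact absurd rfl huv
    · exact h
  · have hvp : v ∈ perp Γ {x} := aSet_subset_perp hdom x hv
    rw [aSet_singleton] at hu
    rcases hu v ⟨hvp, hvx⟩ with rfl | h
    · exact absurd rfl huv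
    · exact h

lemma subset_perp_perp (Y : Set X) : Y ⊆ perp Γ (perp Γ Y) := by
  intro y hy w hw
  rcases hw y hy with rfl | h
  · exact Or.inl rfl
  · exact Or.inr h.symm

lemma perp_antitone {A B : Set X} (h : A ⊆ B) : perp Γ B ⊆ perp Γ A :=
  fun _ hu y hy => hu y (h hy)

lemma cl_mono {A B : Set X} (h : A ⊆ B) : cl Γ A ⊆ cl Γ B :=
  perp_antitone (perp_antitone h)

lemma cl_perp (S : Set X) : cl Γ (perp Γ S) = perp Γ S := by
  refine le_antisymm (perp_antitone (subset_perp_perp S)) (subset_perp_perp (perp Γ S))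

lemma aSet_eq_perp (Y : Set X) :
    aSet Γ Y = perp Γ (⋃ y ∈ Y, (perp Γ {y} \ {y})) := by
  ext u
  constructor
  · intro h w hw
    simp only [Set.mem_iUnion, exists_prop] at hw
    obtain ⟨y, hy, hw⟩ := hw
    exact Set.mem_iInter₂.1 h y hy w hw
  · intro h
    refine Set.mem_iInter₂.2 fun y hy w hw => ?_
    exact h w (Set.mem_biUnion hy hw)

lemma isClosed_aSet (Y : Set X) : IsClosedSet Γ (aSet Γ Y) := by
  rw [IsClosedSet, aSet_eq_perp, cl_perp]

lemma aSet_eq_cl (hdom : Dom Γ = ∅) (x : X) : aSet Γ {x} = cl Γ {x} := by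
  apply le_antisymm
  · intro u hu
    have hup := aSet_subset_perp hdom x hu
    rw [aSet_singleton] at hu
    intro w hw
    by_cases hwx : w = x
    · subst hwx
      exact mem_perp_singleton.1 hup
    · exact hu w ⟨hw, hwx⟩
  · intro u hu
    rw [aSet_singleton]
    intro w hw
    exact hu w hw.1

lemma mem_simClass_self (x : X) : x ∈ simClass Γ x := Or.inl rfl

lemma diaClass_subset (hdom : Dom Γ = ∅) (x : X) : diaClass Γ x ⊆ {x} := by
  intro y hy
  simp only [diaClass, Set.mem_setOf_eq] at hy
  by_contra hne
  simp only [Set.mem_singleton_iff] at hne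
  have hnadj : ¬ Γ.Adj y x := by
    intro h
    have hx : x ∈ perp Γ {y} \ {y} := ⟨mem_perp_singleton.2 (Or.inr h.symm), fun hh => hne (by simpa using hh.symm ▸ rfl)⟩
    rw [hy] at hx
    exact hx.2 rfl
  refine not_dominates hdom x y ?_
  ext v
  constructor
  · rintro ⟨hvx, hvy⟩
    refine ⟨hvy, ?_⟩
    rintro rfl
    rcases mem_perp_singleton.1 hvx with rfl | h
    · exact hne rfl
    · exact hnadj h
  · rintro ⟨hvy, hvne⟩
    have hv' : v ∈ perp Γ {x} \ {x} := by rw [← hy]; exact ⟨hvy, hvne⟩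
    exact ⟨hv'.1, hvy⟩

lemma simClass_clique (hdom : Dom Γ = ∅) {x u v : X} (hu : u ∈ simClass Γ x)
    (hv : v ∈ simClass Γ x) (hne : u ≠ v) : Γ.Adj u v := by
  have hfix : ∀ z, z ∈ simClass Γ x → perp Γ {z} = perp Γ {x} := by
    intro z hz
    rcases hz with hz | hz
    · exact hz
    · have := diaClass_subset hdom x hz
      simp only [Set.mem_singleton_iff] at this
      subst this; rfl
  have h1 := hfix u hu
  have h2 := hfix v hv
  have : v ∈ perp Γ {u} := by
    rw [h1, ← h2]
    exact self_mem_perp v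
  rcases mem_perp_singleton.1 this with h | h
  · exact absurd h.symm hne
  · exact h.symm

lemma LInnSSet_eq_empty (hdom : Dom Γ = ∅) : LInnSSet Γ = ∅ := by
  ext φ
  simp only [LInnSSet, Set.mem_setOf_eq, Set.mem_empty_iff_false, iff_false]
  rintro ⟨x, y, ε, -, ⟨Kc, hKc⟩, -, -⟩
  have hy : y ∈ Subtype.val '' Kc.supp := by rw [← hKc]; exact rfl
  obtain ⟨y', hy', hyv⟩ := hy
  have hyc : y ∉ perp Γ {x} := by
    have := y'.2
    rw [hyv] at this
    exact this
  have hnb : ∀ u, Γ.Adj u y → u ∈ perp Γ {x} := by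
    intro u hadj
    by_contra hu
    have hu' : u ∈ (perp Γ {x})ᶜ := hu
    have hadj' : (Γ.induce ((perp Γ {x})ᶜ)).Adj ⟨u, hu'⟩ y' := by
      simp only [SimpleGraph.comap_adj, Function.Embedding.coe_subtype, hyv]
      exact hadj
    have hcomp : (⟨u, hu'⟩ : ((perp Γ {x})ᶜ : Set X)) ∈ Kc.supp := by
      rw [SimpleGraph.ConnectedComponent.mem_supp_iff,
        SimpleGraph.ConnectedComponent.connectedComponentMk_eq_of_adj hadj']
      exact (SimpleGraph.ConnectedComponent.mem_supp_iff _ _).1 hy'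
    have : u ∈ ({y} : Set X) := by
      rw [hKc]
      exact ⟨_, hcomp, rfl⟩
    rw [Set.mem_singleton_iff] at this
    subst this
    exact Γ.irrefl hadj
  refine not_dominates hdom x y ?_
  ext v
  constructor
  · rintro ⟨hvx, hvy⟩
    refine ⟨hvy, ?_⟩
    rintro rfl
    exact hyc hvx
  · rintro ⟨hvy, hvne⟩
    rcases mem_perp_singleton.1 hvy with rfl | h
    · exact absurd rfl hvne
    · exact ⟨hnb v h, hvy⟩

end Layer1
section Layer2

open Subgroup

variable {X : Type*} {Γ : SimpleGraph X}

lemma gen_comm {x y : X} (h : Γ.Adj x y) : Commute (gen Γ x) (gen Γ y) := by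
  have hrel : FreeGroup.of x * FreeGroup.of y * (FreeGroup.of x)⁻¹ * (FreeGroup.of y)⁻¹ ∈
      raagRels Γ := ⟨x, y, h, rfl⟩
  have h1 : PresentedGroup.mk (raagRels Γ)
      (FreeGroup.of x * FreeGroup.of y * (FreeGroup.of x)⁻¹ * (FreeGroup.of y)⁻¹) = 1 :=
    (QuotientGroup.eq_one_iff _).2 (Subgroup.subset_normalClosure hrel)
  have h2 : gen Γ x * gen Γ y * (gen Γ x)⁻¹ * (gen Γ y)⁻¹ = 1 := by
    have h1' := h1
    simp only [map_mul, map_inv] at h1'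
    exact h1'
  have h3 : gen Γ x * gen Γ y * (gen Γ x)⁻¹ = gen Γ y := by
    rw [mul_inv_eq_one] at h2
    exact h2
  rw [Commute, SemiconjBy]
  rw [mul_inv_eq_iff_eq_mul] at h3
  exact h3

lemma gen_comm' {x y : X} (h : x = y ∨ Γ.Adj x y) : Commute (gen Γ x) (gen Γ y) := by
  rcases h with rfl | h
  · exact Commute.refl _
  · exact gen_comm h

/-- Universal property: a vertex map with commuting images extends to the RAAG. -/
def raagLift {H : Type*} [Group H] (f : X → H)
    (hf : ∀ {x y}, Γ.Adj x y → Commute (f x) (f y)) : RAAG Γ →* H :=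
  PresentedGroup.toGroup (f := f) (by
    rintro r ⟨x, y, hxy, rfl⟩
    simp only [map_mul, map_inv, FreeGroup.lift_apply_of]
    rw [(hf hxy).eq]
    group)

@[simp]
lemma raagLift_gen {H : Type*} [Group H] (f : X → H)
    (hf : ∀ {x y}, Γ.Adj x y → Commute (f x) (f y)) (x : X) :
    raagLift f hf (gen Γ x) = f x :=
  PresentedGroup.toGroup.of _

open Classical in
lemma pr_aux (Γ : SimpleGraph X) (A : Set X) : ∀ {x y : X}, Γ.Adj x y →
    Commute (if x ∈ A then gen Γ x else 1) (if y ∈ A then gen Γ y else 1) := by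
  intro x y h
  by_cases hx : x ∈ A <;> by_cases hy : y ∈ A <;>
    simp [hx, hy, gen_comm h, Commute.one_left, Commute.one_right]

open Classical in
/-- The retraction onto the parabolic subgroup of `A`. -/
noncomputable def pr (Γ : SimpleGraph X) (A : Set X) : RAAG Γ →* RAAG Γ :=
  raagLift (fun x => if x ∈ A then gen Γ x else 1) (pr_aux Γ A)

open Classical in
lemma pr_gen (A : Set X) (x : X) :
    pr Γ A (gen Γ x) = if x ∈ A then gen Γ x else 1 := by
  exact raagLift_gen (fun x => if x ∈ A then gen Γ x else 1) (pr_aux Γ A) x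

lemma pr_gen_of_mem {A : Set X} {x : X} (h : x ∈ A) : pr Γ A (gen Γ x) = gen Γ x := by
  rw [pr_gen, if_pos h]

lemma pr_gen_of_not_mem {A : Set X} {x : X} (h : x ∉ A) : pr Γ A (gen Γ x) = 1 := by
  rw [pr_gen, if_neg h]

lemma mem_parab_gen {A : Set X} {x : X} (h : x ∈ A) : gen Γ x ∈ parab Γ A :=
  Subgroup.subset_closure ⟨x, h, rfl⟩

lemma parab_mono {A B : Set X} (h : A ⊆ B) : parab Γ A ≤ parab Γ B :=
  Subgroup.closure_mono (Set.image_mono h)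

lemma pr_mem_parab {A : Set X} (g : RAAG Γ) : pr Γ A g ∈ parab Γ A := by
  refine PresentedGroup.generated_by (raagRels Γ) ((parab Γ A).comap (pr Γ A)) ?_ g
  intro j
  simp only [Subgroup.mem_comap]
  by_cases hj : j ∈ A
  · rw [show PresentedGroup.of (rels := raagRels Γ) j = gen Γ j from rfl, pr_gen_of_mem hj]
    exact mem_parab_gen hj
  · rw [show PresentedGroup.of (rels := raagRels Γ) j = gen Γ j from rfl, pr_gen_of_not_mem hj]
    exact one_mem _

lemma pr_eq_self_of_mem {A : Set X} {g : RAAG Γ} (h : g ∈ parab Γ A) : pr Γ A g = g := by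
  induction h using Subgroup.closure_induction with
  | mem g hg =>
    obtain ⟨x, hx, rfl⟩ := hg
    exact pr_gen_of_mem hx
  | one => exact map_one _
  | mul a b _ _ ha hb => rw [map_mul, ha, hb]
  | inv a _ ha => rw [map_inv, ha]

lemma mem_parab_iff {A : Set X} {g : RAAG Γ} : g ∈ parab Γ A ↔ pr Γ A g = g :=
  ⟨pr_eq_self_of_mem, fun h => h ▸ pr_mem_parab g⟩

lemma pr_pr (A B : Set X) (g : RAAG Γ) :
    pr Γ A (pr Γ B g) = pr Γ (A ∩ B) g := by
  have : (pr Γ A).comp (pr Γ B) = pr Γ (A ∩ B) := by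
    apply PresentedGroup.ext
    intro x
    show pr Γ A (pr Γ B (gen Γ x)) = pr Γ (A ∩ B) (gen Γ x)
    by_cases hB : x ∈ B
    · by_cases hA : x ∈ A
      · rw [pr_gen_of_mem hB, pr_gen_of_mem hA, pr_gen_of_mem (Set.mem_inter hA hB)]
      · rw [pr_gen_of_mem hB, pr_gen_of_not_mem hA, pr_gen_of_not_mem (fun h => hA h.1)]
    · rw [pr_gen_of_not_mem hB, map_one, pr_gen_of_not_mem (fun h => hB h.2)]
  exact DFunLike.congr_fun this g

lemma mem_parab_inter {A B : Set X} {g : RAAG Γ} (h1 : g ∈ parab Γ A)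
    (h2 : g ∈ parab Γ B) : g ∈ parab Γ (A ∩ B) := by
  rw [mem_parab_iff] at h1 h2 ⊢
  rw [← pr_pr, h2, h1]

lemma commute_of_mem_parab {A : Set X} {x : X} (hA : A ⊆ perp Γ {x}) {g : RAAG Γ}
    (hg : g ∈ parab Γ A) : Commute g (gen Γ x) := by
  induction hg using Subgroup.closure_induction with
  | mem g hg =>
    obtain ⟨u, hu, rfl⟩ := hg
    exact gen_comm' (mem_perp_singleton.1 (hA hu))
  | one => exact Commute.one_left _
  | mul a b _ _ ha hb => exact ha.mul_left hb
  | inv a _ ha => exact ha.inv_left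

lemma parab_univ : parab Γ (Set.univ : Set X) = ⊤ := by
  rw [parab, Set.image_univ]
  exact PresentedGroup.closure_range_of _

/-- conjugating element can be chosen inside the parabolic. -/
lemma conj_retract {A : Set X} {x : X} {g : RAAG Γ} (hx : x ∈ A)
    (h : g⁻¹ * gen Γ x * g ∈ parab Γ A) :
    g⁻¹ * gen Γ x * g = (pr Γ A g)⁻¹ * gen Γ x * (pr Γ A g) := by
  have h2 := pr_eq_self_of_mem h
  rw [map_mul, map_mul, map_inv, pr_gen_of_mem hx] at h2
  exact h2.symm

lemma aut_eq_one_of_fix (φ : MulAut (RAAG Γ)) (h : ∀ x : X, φ (gen Γ x) = gen Γ x) :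
    φ = 1 := by
  have : ∀ g : RAAG Γ, φ g = g := by
    intro g
    refine PresentedGroup.generated_by (raagRels Γ)
      (MonoidHom.eqLocus φ.toMonoidHom (MonoidHom.id _)) ?_ g
    intro j
    exact h j
  exact MulEquiv.ext this

lemma hom_eqOn_parab {H : Type*} [Group H] {f g : RAAG Γ →* H} {A : Set X}
    (h : ∀ x ∈ A, f (gen Γ x) = g (gen Γ x)) {y : RAAG Γ} (hy : y ∈ parab Γ A) :
    f y = g y := by
  refine MonoidHom.eqOn_closure ?_ hy
  rintro z ⟨x, hx, rfl⟩
  exact h x hx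

end Layer2
section Layer3

open HNNExtension HNNExtension.NormalWord Subgroup

variable {G : Type*} [Group G] {K : Subgroup G}

/-- The HNN extension of `G` along the identity of `K`. -/
abbrev RK (K : Subgroup G) : Type _ := HNNExtension G K K (MulEquiv.refl ↥K)

lemma toSubgroupKK (K : Subgroup G) (u : ℤˣ) : HNNExtension.toSubgroup K K u = K := by
  rcases Int.units_eq_one_or u with rfl | rfl <;> rfl

lemma t_comm_of {k : G} (hk : k ∈ K) :
    Commute (HNNExtension.t : RK K) (HNNExtension.of k) := by
  have := HNNExtension.t_mul_of (φ := (MulEquiv.refl ↥K)) ⟨k, hk⟩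
  simp at this
  exact this

lemma exists_reduced (c : RK K) :
    ∃ w : ReducedWord G K K, w.prod (MulEquiv.refl ↥K) = c := by
  obtain ⟨d⟩ : Nonempty (TransversalPair G K K) := inferInstance
  refine ⟨(NormalWord.equiv (MulEquiv.refl ↥K) d c).toReducedWord, ?_⟩
  exact (NormalWord.equiv (MulEquiv.refl ↥K) d).symm_apply_apply c

private lemma prod_mul_of (v : ReducedWord G K K) (g : G) :
    ∃ v' : ReducedWord G K K,
      v'.prod (MulEquiv.refl ↥K) = v.prod (MulEquiv.refl ↥K) * HNNExtension.of g ∧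
      v'.toList.map Prod.fst = v.toList.map Prod.fst := by
  rcases eq_or_ne v.toList [] with hL | hL
  · refine ⟨⟨v.head * g, [], List.isChain_nil⟩, ?_, by simp [hL]⟩
    simp [ReducedWord.prod, hL, mul_assoc]
  · set p := v.toList.getLast hL with hpdef
    have hsplit : v.toList.dropLast ++ [p] = v.toList :=
      List.dropLast_append_getLast hL
    have hjunc := v.chain
    rw [← hsplit, List.isChain_append] at hjunc
    have hchain' : (v.toList.dropLast ++ [(p.1, p.2 * g)]).IsChain
        (fun a b => a.2 ∈ HNNExtension.toSubgroup K K a.1 → a.1 = b.1) := by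
      rw [List.isChain_append]
      refine ⟨hjunc.1, List.isChain_singleton _, ?_⟩
      intro x hx y hy
      simp only [List.head?_cons, Option.mem_def, Option.some.injEq] at hy
      subst hy
      exact fun hmem => hjunc.2.2 x hx p (by simp) hmem
    refine ⟨⟨v.head, v.toList.dropLast ++ [(p.1, p.2 * g)], hchain'⟩, ?_, ?_⟩
    · conv_rhs => rw [ReducedWord.prod, ← hsplit]
      rw [ReducedWord.prod]
      simp [List.map_append, mul_assoc]
    · conv_rhs => rw [← hsplit]
      simp

theorem commute_t_mem {c : RK K} (hc : Commute c (HNNExtension.t : RK K)) :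
    c ∈ Subgroup.closure
      ({(HNNExtension.t : RK K)} ∪ (HNNExtension.of '' (K : Set G))) := by
  obtain ⟨w, rfl⟩ := exists_reduced c
  suffices H : ∀ (n : ℕ) (w : ReducedWord G K K), w.toList.length = n →
      Commute (w.prod (MulEquiv.refl ↥K)) (HNNExtension.t : RK K) →
      w.prod (MulEquiv.refl ↥K) ∈ Subgroup.closure
        ({(HNNExtension.t : RK K)} ∪ (HNNExtension.of '' (K : Set G))) by
    exact H _ w rfl hc
  clear hc w
  intro n
  induction n using Nat.strong_induction_on with
  | _ n ih =>
  intro w hlen hc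
  have htS : (HNNExtension.t : RK K) ∈ Subgroup.closure
      ({(HNNExtension.t : RK K)} ∪ (HNNExtension.of '' (K : Set G))) :=
    Subgroup.subset_closure (Or.inl rfl)
  have hofS : ∀ k ∈ K, (HNNExtension.of k : RK K) ∈ Subgroup.closure
      ({(HNNExtension.t : RK K)} ∪ (HNNExtension.of '' (K : Set G))) :=
    fun k hk => Subgroup.subset_closure (Or.inr ⟨k, hk, rfl⟩)
  -- Step 1: the head of the word lies in `K`.
  have hhead : w.head ∈ K := by
    by_contra hh
    have hchain1 : (((1:ℤˣ), w.head) :: w.toList).Chain'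
        (fun a b => a.2 ∈ HNNExtension.toSubgroup K K a.1 → a.1 = b.1) :=
      List.isChain_cons.2
        ⟨fun y _ hmem => absurd (by simpa [toSubgroupKK] using hmem) hh, w.chain⟩
    have hw1 : (⟨1, ((1:ℤˣ), w.head) :: w.toList, hchain1⟩ :
        ReducedWord G K K).prod (MulEquiv.refl ↥K)
        = HNNExtension.t * w.prod (MulEquiv.refl ↥K) := by
      rw [ReducedWord.prod, ReducedWord.prod]
      simp [mul_assoc]
    by_cases hj : ∀ p ∈ w.toList.getLast?, p.2 ∈ K → p.1 = 1
    · -- compare `t * c` with `c * t` directly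
      have hchain2 : (w.toList ++ [((1:ℤˣ), (1:G))]).IsChain
          (fun a b => a.2 ∈ HNNExtension.toSubgroup K K a.1 → a.1 = b.1) := by
        rw [List.isChain_append]
        refine ⟨w.chain, List.isChain_singleton _, ?_⟩
        intro x hx y hy
        simp only [List.head?_cons, Option.mem_def, Option.some.injEq] at hy
        subst hy
        exact fun hmem => hj x hx (by simpa [toSubgroupKK] using hmem)
      have hw2 : (⟨w.head, w.toList ++ [((1:ℤˣ), (1:G))], hchain2⟩ :
          ReducedWord G K K).prod (MulEquiv.refl ↥K)
          = w.prod (MulEquiv.refl ↥K) * HNNExtension.t := by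
        rw [ReducedWord.prod, ReducedWord.prod]
        simp [List.map_append, mul_assoc]
      have heq : (⟨1, ((1:ℤˣ), w.head) :: w.toList, hchain1⟩ :
          ReducedWord G K K).prod (MulEquiv.refl ↥K)
          = (⟨w.head, w.toList ++ [((1:ℤˣ), (1:G))], hchain2⟩ :
          ReducedWord G K K).prod (MulEquiv.refl ↥K) := by
        rw [hw1, hw2, hc.eq]
      have h2 := (ReducedWord.map_fst_eq_and_of_prod_eq (MulEquiv.refl ↥K) heq).2
        1 (by simp)
      simp only [toSubgroup_neg_one, inv_one, one_mul] at h2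
      exact hh h2
    · -- the word ends with `t⁻¹ * k`, `k ∈ K`: contradiction via lengths
      push_neg at hj
      obtain ⟨p, hp, hpK, hpne⟩ := hj
      have hpu : p.1 = -1 := (Int.units_eq_one_or p.1).resolve_left hpne
      have hLne : w.toList ≠ [] := by
        rintro h0
        rw [h0] at hp
        simp at hp
      have hsplit : w.toList.dropLast ++ [p] = w.toList :=
        List.dropLast_append_getLast? p hp
      have hchain0 : (w.toList.dropLast).Chain'
          (fun a b => a.2 ∈ HNNExtension.toSubgroup K K a.1 → a.1 = b.1) :=
        w.chain.prefix (List.dropLast_prefix _)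
      have hw0 : w.prod (MulEquiv.refl ↥K)
          = (⟨w.head, w.toList.dropLast, hchain0⟩ :
            ReducedWord G K K).prod (MulEquiv.refl ↥K)
            * (HNNExtension.t ^ ((p.1 : ℤ)) * HNNExtension.of p.2) := by
        conv_lhs => rw [ReducedWord.prod, ← hsplit]
        rw [ReducedWord.prod]
        simp [List.map_append, mul_assoc]
      have hpd : w.prod (MulEquiv.refl ↥K) * HNNExtension.t
          = (⟨w.head, w.toList.dropLast, hchain0⟩ :
            ReducedWord G K K).prod (MulEquiv.refl ↥K) * HNNExtension.of p.2 := by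
        rw [hw0, hpu, mul_assoc, mul_assoc]
        congr 1
        rw [← (t_comm_of hpK).eq]
        simp [Units.val_neg, Units.val_one, zpow_neg, zpow_one]
      obtain ⟨w2, hw2prod, hw2fst⟩ :=
        prod_mul_of (⟨w.head, w.toList.dropLast, hchain0⟩ : ReducedWord G K K) p.2
      have heq : (⟨1, ((1:ℤˣ), w.head) :: w.toList, hchain1⟩ :
          ReducedWord G K K).prod (MulEquiv.refl ↥K)
          = w2.prod (MulEquiv.refl ↥K) := by
        rw [hw1, ← hc.eq, hpd, ← hw2prod]
      have hfst := (ReducedWord.map_fst_eq_and_of_prod_eq (MulEquiv.refl ↥K) heq).1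
      rw [hw2fst] at hfst
      have hlen1 := congrArg List.length hfst
      simp only [List.length_map, List.length_cons, List.length_dropLast] at hlen1
      have hpos : 0 < w.toList.length := List.length_pos_iff.2 hLne
      omega
  -- Step 2: peel off the first letter.
  rcases hL : w.toList with _ | ⟨q, L'⟩
  · have : w.prod (MulEquiv.refl ↥K) = HNNExtension.of w.head := by
      rw [ReducedWord.prod, hL]
      simp
    rw [this]
    exact hofS _ hhead
  · have hchainT : L'.Chain'
        (fun a b => a.2 ∈ HNNExtension.toSubgroup K K a.1 → a.1 = b.1) := by
      have := w.chain
      rw [hL, List.isChain_cons] at this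
      exact this.2
    have hdecomp : w.prod (MulEquiv.refl ↥K)
        = HNNExtension.of w.head * HNNExtension.t ^ ((q.1 : ℤ))
          * (⟨q.2, L', hchainT⟩ : ReducedWord G K K).prod (MulEquiv.refl ↥K) := by
      rw [ReducedWord.prod, ReducedWord.prod, hL]
      simp [mul_assoc]
    have hofh : Commute (HNNExtension.of w.head : RK K) (HNNExtension.t : RK K) :=
      (t_comm_of hhead).symm
    have htq : Commute (HNNExtension.t ^ ((q.1 : ℤ)) : RK K) (HNNExtension.t : RK K) :=
      (Commute.refl _).zpow_left _
    have hcommT : Commute ((⟨q.2, L', hchainT⟩ : ReducedWord G K K).prod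
        (MulEquiv.refl ↥K)) (HNNExtension.t : RK K) := by
      have hrw : (⟨q.2, L', hchainT⟩ : ReducedWord G K K).prod (MulEquiv.refl ↥K)
          = (HNNExtension.of w.head * HNNExtension.t ^ ((q.1 : ℤ)))⁻¹
            * w.prod (MulEquiv.refl ↥K) := by
        rw [hdecomp]
        group
      rw [hrw]
      exact ((hofh.mul_left htq).inv_left).mul_left hc
    have hlt : L'.length < n := by
      rw [← hlen, hL]
      simp
    have hmem := ih L'.length hlt (⟨q.2, L', hchainT⟩ : ReducedWord G K K) rfl hcommT
    rw [hdecomp]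
    exact mul_mem (mul_mem (hofS _ hhead) (zpow_mem htS _)) hmem

end Layer3
section Layer4

open Subgroup HNNExtension

variable {X : Type*} {Γ : SimpleGraph X}

variable (Γ) in
/-- The parabolic of the link of `w`, as a subgroup of the parabolic of `{w}ᶜ`. -/
def KP (w : X) : Subgroup ↥(parab Γ ({w}ᶜ : Set X)) :=
  (parab Γ (perp Γ {w} \ {w})).subgroupOf (parab Γ ({w}ᶜ : Set X))

open Classical in
variable (Γ) in
/-- The vertex map for `theta`. -/
noncomputable def thetaFun (w : X) : X → RK (KP Γ w) := fun x =>
  if h : x = w then HNNExtension.t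
  else HNNExtension.of ⟨gen Γ x, mem_parab_gen (Set.mem_compl_singleton_iff.mpr h)⟩

lemma thetaFun_comm (w : X) : ∀ {x y : X}, Γ.Adj x y →
    Commute (thetaFun Γ w x) (thetaFun Γ w y) := by
  intro x y hadj
  have hxy : x ≠ y := hadj.ne
  by_cases hx : x = w <;> by_cases hy : y = w
  · exact absurd (hx.trans hy.symm) hxy
  · rw [thetaFun, thetaFun, dif_pos hx, dif_neg hy]
    have hyl : gen Γ y ∈ parab Γ (perp Γ {w} \ {w}) :=
      mem_parab_gen ⟨mem_perp_singleton.2 (Or.inr (hx ▸ hadj).symm), hy⟩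
    have := HNNExtension.t_mul_of (φ := (MulEquiv.refl ↥(KP Γ w)))
      ⟨⟨gen Γ y, mem_parab_gen (Set.mem_compl_singleton_iff.mpr hy)⟩,
        Subgroup.mem_subgroupOf.mpr hyl⟩
    simp at this
    exact this
  · rw [thetaFun, thetaFun, dif_pos hy, dif_neg hx]
    have hxl : gen Γ x ∈ parab Γ (perp Γ {w} \ {w}) :=
      mem_parab_gen ⟨mem_perp_singleton.2 (Or.inr (hy ▸ hadj)), hx⟩
    have h0 := HNNExtension.t_mul_of (φ := (MulEquiv.refl ↥(KP Γ w)))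
      ⟨⟨gen Γ x, mem_parab_gen (Set.mem_compl_singleton_iff.mpr hx)⟩,
        Subgroup.mem_subgroupOf.mpr hxl⟩
    have hcomm : Commute (HNNExtension.t : RK (KP Γ w))
        (HNNExtension.of ⟨gen Γ x, mem_parab_gen (Set.mem_compl_singleton_iff.mpr hx)⟩) := by
      simp at h0
      exact h0
    exact hcomm.symm
  · rw [thetaFun, thetaFun, dif_neg hx, dif_neg hy]
    rw [Commute, SemiconjBy, ← map_mul, ← map_mul]
    congr 1
    exact Subtype.ext (by simpa using (gen_comm hadj).eq)

variable (Γ) in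
/-- The map from the RAAG to the HNN extension. -/
noncomputable def theta (w : X) : RAAG Γ →* RK (KP Γ w) :=
  raagLift (thetaFun Γ w) (thetaFun_comm w)

lemma theta_gen_self (w : X) : theta Γ w (gen Γ w) = HNNExtension.t := by
  rw [theta, raagLift_gen, thetaFun, dif_pos rfl]

lemma theta_gen_ne {w x : X} (h : x ≠ w) :
    theta Γ w (gen Γ x) =
      HNNExtension.of ⟨gen Γ x, mem_parab_gen (Set.mem_compl_singleton_iff.mpr h)⟩ := by
  rw [theta, raagLift_gen, thetaFun, dif_neg h]

variable (Γ) in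
/-- The map from the HNN extension back to the RAAG. -/
noncomputable def lam (w : X) : RK (KP Γ w) →* RAAG Γ :=
  HNNExtension.lift (parab Γ ({w}ᶜ : Set X)).subtype (gen Γ w) (by
    intro a
    have hmem : ((a : ↥(parab Γ ({w}ᶜ : Set X))) : RAAG Γ) ∈
        parab Γ (perp Γ {w} \ {w}) := Subgroup.mem_subgroupOf.mp a.2
    have hcomm : Commute (((a : ↥(parab Γ ({w}ᶜ : Set X))) : RAAG Γ)) (gen Γ w) :=
      commute_of_mem_parab Set.diff_subset hmem
    simpa using hcomm.symm.eq)

lemma lam_theta (w : X) (g : RAAG Γ) : lam Γ w (theta Γ w g) = g := by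
  have h : (lam Γ w).comp (theta Γ w) = MonoidHom.id (RAAG Γ) := by
    apply PresentedGroup.ext
    intro x
    show lam Γ w (theta Γ w (gen Γ x)) = gen Γ x
    by_cases hx : x = w
    · subst hx
      rw [theta_gen_self, lam, HNNExtension.lift_t]
    · rw [theta_gen_ne hx, lam, HNNExtension.lift_of]
      rfl
  exact DFunLike.congr_fun h g

lemma theta_coe (w : X) (p : RAAG Γ) (hp : p ∈ parab Γ ({w}ᶜ : Set X)) :
    theta Γ w p = HNNExtension.of (⟨p, hp⟩ : ↥(parab Γ ({w}ᶜ : Set X))) := by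
  induction hp using Subgroup.closure_induction with
  | mem g hg =>
    obtain ⟨x, hx, rfl⟩ := hg
    rw [theta_gen_ne (Set.mem_compl_singleton_iff.mp hx)]
  | one =>
    rw [map_one]
    exact (map_one _).symm
  | mul a b ha hb iha ihb =>
    rw [map_mul, iha, ihb, ← map_mul]
    rfl
  | inv a ha iha =>
    rw [map_inv, iha, ← map_inv]
    rfl

theorem mem_parab_perp_of_commute {w : X} {c : RAAG Γ} (hc : Commute c (gen Γ w)) :
    c ∈ parab Γ (perp Γ {w}) := by
  have hct : Commute (theta Γ w c) (HNNExtension.t : RK (KP Γ w)) := by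
    have h := hc.map (theta Γ w)
    rwa [theta_gen_self] at h
  have hmem := commute_t_mem hct
  have h2 : (Subgroup.closure
      ({(HNNExtension.t : RK (KP Γ w))} ∪
        (HNNExtension.of '' ((KP Γ w : Set ↥(parab Γ ({w}ᶜ : Set X))))))).map (lam Γ w)
      ≤ parab Γ (perp Γ {w}) := by
    rw [MonoidHom.map_closure]
    refine (Subgroup.closure_le _).2 ?_
    rintro y ⟨s, hs, rfl⟩
    rcases hs with hs | ⟨k, hk, rfl⟩
    · rcases hs with rfl
      rw [lam, HNNExtension.lift_t]
      exact mem_parab_gen (self_mem_perp w)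
    · rw [lam, HNNExtension.lift_of]
      have : ((k : ↥(parab Γ ({w}ᶜ : Set X))) : RAAG Γ) ∈ parab Γ (perp Γ {w} \ {w}) :=
        Subgroup.mem_subgroupOf.mp hk
      exact parab_mono Set.diff_subset this
  have : lam Γ w (theta Γ w c) ∈ parab Γ (perp Γ {w}) :=
    h2 ⟨theta Γ w c, hmem, rfl⟩
  rwa [lam_theta] at this

end Layer4
section Layer5

open Subgroup

variable {X : Type*} {Γ : SimpleGraph X}

theorem common_conj_finset {φ : MulAut (RAAG Γ)} (hφ : IsBasisConj Γ φ)
    (s : Finset X) (hcl : ∀ u ∈ s, ∀ v ∈ s, u ≠ v → Γ.Adj u v) :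
    ∃ f : RAAG Γ, ∀ z ∈ s, φ (gen Γ z) = f⁻¹ * gen Γ z * f := by
  classical
  induction s using Finset.induction_on with
  | empty => exact ⟨1, by simp⟩
  | @insert a s ha ih =>
    obtain ⟨f, hf⟩ := ih (fun u hu v hv huv =>
      hcl u (Finset.mem_insert_of_mem hu) v (Finset.mem_insert_of_mem hv) huv)
    obtain ⟨g, hg⟩ := hφ a
    set r := g * f⁻¹ with hr
    have hfa : f * φ (gen Γ a) * f⁻¹ = r⁻¹ * gen Γ a * r := by
      rw [hg, hr]
      group
    have hcz : ∀ z ∈ s, Commute (r⁻¹ * gen Γ a * r) (gen Γ z) := by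
      intro z hz
      have hadj : Γ.Adj a z := hcl a (Finset.mem_insert_self a s) z
        (Finset.mem_insert_of_mem hz) (by rintro rfl; exact ha hz)
      have h1 : Commute (φ (gen Γ a)) (φ (gen Γ z)) := by
        have := (gen_comm hadj).map φ.toMonoidHom
        simpa using this
      have h2 := h1.map (MulAut.conj f).toMonoidHom
      have e1 : (MulAut.conj f).toMonoidHom (φ (gen Γ a)) = r⁻¹ * gen Γ a * r := by
        simpa [MulAut.conj_apply] using hfa
      have e2 : (MulAut.conj f).toMonoidHom (φ (gen Γ z)) = gen Γ z := by
        simp only [MulEquiv.coe_toMonoidHom, MulAut.conj_apply]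
        rw [hf z hz]
        group
      rwa [e1, e2] at h2
    set B : Set X := {u | ∀ z ∈ s, u ∈ perp Γ {z}} with hB
    have hmemB : r⁻¹ * gen Γ a * r ∈ parab Γ B := by
      have main : ∀ (t : Finset X), (∀ z ∈ t, Commute (r⁻¹ * gen Γ a * r) (gen Γ z)) →
          r⁻¹ * gen Γ a * r ∈ parab Γ {u | ∀ z ∈ t, u ∈ perp Γ {z}} := by
        intro t
        induction t using Finset.induction_on with
        | empty =>
          intro _
          have he : {u | ∀ z ∈ (∅ : Finset X), u ∈ perp Γ {z}} = Set.univ := by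
            ext u; simp
          rw [he, parab_univ]
          exact Subgroup.mem_top _
        | @insert b t hb iht =>
          intro hcomm
          have h1 := mem_parab_perp_of_commute (hcomm b (Finset.mem_insert_self b t))
          have h2 := iht (fun z hz => hcomm z (Finset.mem_insert_of_mem hz))
          have h3 := mem_parab_inter h1 h2
          have he : perp Γ {b} ∩ {u | ∀ z ∈ t, u ∈ perp Γ {z}}
              = {u | ∀ z ∈ insert b t, u ∈ perp Γ {z}} := by
            ext u
            simp only [Set.mem_inter_iff, Set.mem_setOf_eq, Finset.mem_insert]
            constructor
            · rintro ⟨hub, hut⟩ z (rfl | hz)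
              · exact hub
              · exact hut z hz
            · intro h
              exact ⟨h b (Or.inl rfl), fun z hz => h z (Or.inr hz)⟩
          rwa [he] at h3
      exact main s hcz
    have haB : a ∈ B := by
      intro z hz
      exact mem_perp_singleton.2 (Or.inr (hcl a (Finset.mem_insert_self a s) z
        (Finset.mem_insert_of_mem hz) (by rintro rfl; exact ha hz)))
    have hretr := conj_retract haB hmemB
    set c := pr Γ B r with hcdef
    have hcP : c ∈ parab Γ B := pr_mem_parab r
    have hccomm : ∀ z ∈ s, Commute c (gen Γ z) := by
      intro z hz
      refine commute_of_mem_parab ?_ hcP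
      intro u hu
      rw [hB] at hu
      exact hu z hz
    refine ⟨c * f, ?_⟩
    intro z hz
    rcases Finset.mem_insert.1 hz with rfl | hzs
    · have ha1 : φ (gen Γ z) = f⁻¹ * (r⁻¹ * gen Γ z * r) * f := by
        rw [← hfa]
        group
      rw [ha1, hretr]
      group
    · rw [hf z hzs]
      have h3 : c⁻¹ * gen Γ z * c = gen Γ z := by
        rw [(hccomm z hzs).inv_left.eq, mul_assoc, inv_mul_cancel, mul_one]
      rw [mul_inv_rev]
      calc f⁻¹ * gen Γ z * f = f⁻¹ * (c⁻¹ * gen Γ z * c) * f := by rw [h3]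
      _ = f⁻¹ * c⁻¹ * gen Γ z * (c * f) := by group

theorem common_conj_set [Fintype X] {φ : MulAut (RAAG Γ)} (hφ : IsBasisConj Γ φ)
    (A : Set X) (hcl : ∀ u ∈ A, ∀ v ∈ A, u ≠ v → Γ.Adj u v) :
    ∃ f : RAAG Γ, ∀ z ∈ A, φ (gen Γ z) = f⁻¹ * gen Γ z * f := by
  classical
  obtain ⟨f, hf⟩ := common_conj_finset hφ A.toFinset
    (fun u hu v hv huv => hcl u (Set.mem_toFinset.1 hu) v (Set.mem_toFinset.1 hv) huv)
  exact ⟨f, fun z hz => hf z (Set.mem_toFinset.2 hz)⟩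

end Layer5

/-- If `Γ` has no dominated vertices then:
(i) `Conj(G) ∩ St(K) = Conj_S(G) = {1}`, `Conj(G) = Conj_V(G) = Conj_N(G)`, and
`Conj(G)` is normal in `St^conj(K)`; (ii) `St(L) = St(K)`. -/
theorem noDominated_consequences {X : Type*} [Fintype X] (Γ : SimpleGraph X)
    (hdom : Dom Γ = ∅) :
    (∀ φ : MulAut (RAAG Γ),
      (IsBasisConj Γ φ ∧ IsStK Γ φ) ↔ φ ∈ Subgroup.closure (LInnSSet Γ)) ∧
    Subgroup.closure (LInnSSet Γ) = (⊥ : Subgroup (MulAut (RAAG Γ))) ∧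
    (∀ φ : MulAut (RAAG Γ), IsBasisConj Γ φ ↔ IsConjV Γ φ) ∧
    (∀ φ : MulAut (RAAG Γ), IsBasisConj Γ φ ↔ IsConjN Γ φ) ∧
    (∀ φ ψ : MulAut (RAAG Γ), IsBasisConj Γ φ → IsStConjK Γ ψ →
      IsBasisConj Γ (ψ⁻¹ * φ * ψ)) ∧
    (∀ φ : MulAut (RAAG Γ), IsStL Γ φ ↔ IsStK Γ φ) := by
  classical
  have hbot : Subgroup.closure (LInnSSet Γ) = (⊥ : Subgroup (MulAut (RAAG Γ))) := by
    rw [LInnSSet_eq_empty hdom, Subgroup.closure_empty]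
  have hconjN : ∀ φ : MulAut (RAAG Γ), IsBasisConj Γ φ →
      ∀ x : X, ∃ f, ∀ z ∈ aSet Γ {x}, φ (gen Γ z) = f⁻¹ * gen Γ z * f := by
    intro φ hφ x
    exact common_conj_set hφ _ (fun u hu v hv huv => aSet_clique hdom hu hv huv)
  have hconjV : ∀ φ : MulAut (RAAG Γ), IsBasisConj Γ φ →
      ∀ x : X, ∃ f, ∀ z ∈ simClass Γ x, φ (gen Γ z) = f⁻¹ * gen Γ z * f := by
    intro φ hφ x
    exact common_conj_set hφ _ (fun u hu v hv huv => simClass_clique hdom hu hv huv)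
  refine ⟨?_, hbot, ?_, ?_, ?_, ?_⟩
  · -- (1) Conj ∩ St(K) = Conj_S = 1
    intro φ
    rw [hbot, Subgroup.mem_bot]
    constructor
    · rintro ⟨hbc, hstk⟩
      apply aut_eq_one_of_fix
      intro x
      obtain ⟨g, hg⟩ := hbc x
      have hmap := hstk _ ⟨{x}, rfl⟩
      have hφx : φ (gen Γ x) ∈ parab Γ (aSet Γ {x}) := by
        rw [← hmap]
        exact ⟨gen Γ x, mem_parab_gen (mem_aSet_self x), rfl⟩
      rw [hg] at hφx ⊢
      rw [conj_retract (mem_aSet_self x) hφx]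
      have hcomm : Commute (pr Γ (aSet Γ {x}) g) (gen Γ x) :=
        commute_of_mem_parab (aSet_subset_perp hdom x) (pr_mem_parab g)
      rw [hcomm.inv_left.eq, mul_assoc, inv_mul_cancel, mul_one]
    · rintro rfl
      refine ⟨fun x => ⟨1, by simp⟩, ?_⟩
      intro A _
      have h1 : (1 : MulAut (RAAG Γ)).toMonoidHom = MonoidHom.id _ := rfl
      rw [h1, Subgroup.map_id]
  · -- (3) Conj = Conj_V
    intro φ
    exact ⟨fun h => ⟨h, hconjV φ h⟩, fun h => h.1⟩
  · -- (4) Conj = Conj_N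
    intro φ
    exact ⟨fun h => ⟨h, hconjN φ h⟩, fun h => h.1⟩
  · -- (5) normality in St^conj(K)
    intro φ ψ hφ hψ
    intro x
    obtain ⟨f, hfA⟩ := hψ (aSet Γ {x}) ⟨{x}, rfl⟩
    obtain ⟨h, hh⟩ := hconjN φ hφ x
    have h1 : ψ (gen Γ x) ∈ conjBy (parab Γ (aSet Γ {x})) f := by
      rw [← hfA]
      exact ⟨gen Γ x, mem_parab_gen (mem_aSet_self x), rfl⟩
    obtain ⟨a, haP, hae⟩ := h1
    have hae' : f⁻¹ * a * f = ψ (gen Γ x) := by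
      simpa [conjBy, MulAut.conj_apply] using hae
    have hφa : φ a = h⁻¹ * a * h := by
      have heq := hom_eqOn_parab (f := φ.toMonoidHom)
        (g := (MulAut.conj h⁻¹).toMonoidHom) (A := aSet Γ {x}) ?_ haP
      · simpa [MulAut.conj_apply] using heq
      · intro z hz
        simp only [MulEquiv.coe_toMonoidHom, MulAut.conj_apply]
        rw [hh z hz]
        group
    refine ⟨ψ⁻¹ (f⁻¹ * h * φ f), ?_⟩
    have hkey : φ (ψ (gen Γ x)) = (f⁻¹ * h * φ f)⁻¹ * ψ (gen Γ x) * (f⁻¹ * h * φ f) := by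
      rw [← hae', map_mul, map_mul, map_inv, hφa]
      group
    have hmul : (ψ⁻¹ * φ * ψ) (gen Γ x) = ψ⁻¹ (φ (ψ (gen Γ x))) := rfl
    rw [hmul, hkey, map_mul, map_mul, map_inv]
    have hres : ψ⁻¹ (ψ (gen Γ x)) = gen Γ x := by
      rw [MulAut.inv_def]
      exact ψ.symm_apply_apply _
    rw [hres]
  · -- (6) St(L) = St(K)
    intro φ
    constructor
    · intro hL A hA
      obtain ⟨Y, rfl⟩ := hA
      exact hL _ (isClosed_aSet Y)
    · intro hK C hC
      have hsub : ∀ z ∈ C, parab Γ (aSet Γ {z}) ≤ parab Γ C := by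
        intro z hz
        refine parab_mono ?_
        rw [aSet_eq_cl hdom]
        intro u hu
        rw [hC]
        exact cl_mono (show ({z} : Set X) ⊆ C by simpa using hz) hu
      have hmapped : ∀ z ∈ C, φ (gen Γ z) ∈ parab Γ C := by
        intro z hz
        have h1 := hK (aSet Γ {z}) ⟨{z}, rfl⟩
        have h2 : φ (gen Γ z) ∈ parab Γ (aSet Γ {z}) := by
          rw [← h1]
          exact ⟨_, mem_parab_gen (mem_aSet_self z), rfl⟩
        exact hsub z hz h2
      have hmapped' : ∀ z ∈ C, φ⁻¹ (gen Γ z) ∈ parab Γ C := by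
        intro z hz
        have h1 := hK (aSet Γ {z}) ⟨{z}, rfl⟩
        have h2 : gen Γ z ∈ Subgroup.map φ.toMonoidHom (parab Γ (aSet Γ {z})) := by
          rw [h1]
          exact mem_parab_gen (mem_aSet_self z)
        obtain ⟨y, hy, hyy⟩ := h2
        have h3 : φ⁻¹ (gen Γ z) = y := by
          rw [← hyy, MulAut.inv_def]
          exact φ.symm_apply_apply _
        rw [h3]
        exact hsub z hz hy
      apply le_antisymm
      · rw [parab, MonoidHom.map_closure, Subgroup.closure_le]
        rintro y ⟨s, ⟨z, hz, rfl⟩, rfl⟩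
        exact hmapped z hz
      · rw [parab, Subgroup.closure_le]
        rintro s ⟨z, hz, rfl⟩
        refine ⟨φ⁻¹ (gen Γ z), hmapped' z hz, ?_⟩
        show φ (φ⁻¹ (gen Γ z)) = gen Γ z
        rw [MulAut.inv_def]
        exact φ.apply_symm_apply _


end PCG
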